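/- Fix a nonempty closed set V ⊆ [0,L]. Then inf { ‖u'‖_{L^∞} / ‖u‖_{L^∞} : u Lipschitz on [0,L], u = 0 on V, u ≢ 0 } equals 1 / max_{z ∈ [0,L]} dist(z, V), with the infimum attained by the distance cone u(x) = max(0, 1 - dist(x, z₀)/dist(z₀, V)) where z₀ maximizes dist(·, V). -/

import Mathlib

open MeasureTheory Filter Real Set

lemma lemA {f : ℝ → ℝ} {K : NNReal} (hf : LipschitzWith K f) {a b M : ℝ}
    (hab : a ≤ b) (hM : ∀ᵐ t, t ∈ Set.Ioc a b → deriv f t ≤ M) :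
    f b - f a ≤ M * (b - a) := by
  set g : ℝ → ℝ := fun x => (K : ℝ) * x - f x with hgdef
  have hg : Monotone g := by
    intro x y hxy
    have h1 : |f y - f x| ≤ (K : ℝ) * |y - x| := by
      simpa [Real.dist_eq] using hf.dist_le_mul y x
    have h2 := (abs_le.1 h1).2
    rw [abs_of_nonneg (sub_nonneg.2 hxy)] at h2
    simp only [hgdef]
    nlinarith
  have hgc : Continuous g := (continuous_const.mul continuous_id).sub hf.continuous
  set G := hg.stieltjesFunction with hGdef
  set ρ : ℝ → ℝ := fun x => (G.measure.rnDeriv volume x).toReal with hρdef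
  have hGg : ∀ x, G x = g x := by
    intro x
    rw [hGdef, hg.stieltjesFunction_eq]
    exact rightLim_eq_of_tendsto
      ((hgc.tendsto x).mono_left nhdsWithin_le_nhds)
  have key : ∀ᵐ x, deriv f x = (K : ℝ) - ρ x := by
    filter_upwards [hg.ae_hasDerivAt, hf.ae_differentiableAt_real] with x h1 h2
    have hfd : HasDerivAt f (deriv f x) x := h2.hasDerivAt
    have hgd : HasDerivAt g ((K : ℝ) - deriv f x) x := by
      have h := (((hasDerivAt_id x).const_mul (K : ℝ)).sub hfd); rw [mul_one] at h; exact h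
    have := hgd.unique h1
    rw [hρdef]
    linarith [this]
  have hbd : ∀ x, |deriv f x| ≤ (K : ℝ) := fun x => by
    simpa using norm_deriv_le_of_lipschitz (𝕜 := ℝ) hf
  have hmeas : Measurable (deriv f) := measurable_deriv f
  have hvol : volume (Set.Ioc a b) ≠ ⊤ := by simp
  have hint : IntegrableOn (deriv f) (Set.Ioc a b) := by
    refine Measure.integrableOn_of_bounded (M := (K : ℝ)) hvol hmeas.aestronglyMeasurable ?_
    exact ae_of_all _ fun x => by simpa using hbd x
  have hμ : G.measure (Set.Ioc a b) = ENNReal.ofReal (g b - g a) := by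
    rw [StieltjesFunction.measure_Ioc, hGg, hGg]
  have hρint : IntegrableOn ρ (Set.Ioc a b) := by
    refine Measure.integrableOn_toReal_rnDeriv ?_
    rw [hμ]; exact ENNReal.ofReal_ne_top
  have hub : ∫ x in Set.Ioc a b, ρ x ≤ g b - g a := by
    have := Measure.setIntegral_toReal_rnDeriv_le (μ := G.measure) (ν := volume)
      (s := Set.Ioc a b) (by rw [hμ]; exact ENNReal.ofReal_ne_top)
    rwa [measureReal_def, hμ, ENNReal.toReal_ofReal (sub_nonneg.2 (hg hab))] at this
  have hcongr : ∫ x in Set.Ioc a b, ρ x = ∫ x in Set.Ioc a b, ((K : ℝ) - deriv f x) := by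
    refine integral_congr_ae (ae_restrict_of_ae (key.mono fun x hx => ?_))
    show ρ x = (K : ℝ) - deriv f x; rw [hx]; ring
  have hsplit : ∫ x in Set.Ioc a b, ((K : ℝ) - deriv f x)
      = (K : ℝ) * (b - a) - ∫ x in Set.Ioc a b, deriv f x := by
    rw [integral_sub (integrableOn_const (C := (K : ℝ)) hvol) hint]
    congr 1
    simp [Real.volume_Ioc, ENNReal.toReal_ofReal (sub_nonneg.2 hab), mul_comm, hab]
  have hMint : ∫ x in Set.Ioc a b, deriv f x ≤ M * (b - a) := by
    have hle : ∀ᵐ x ∂(volume.restrict (Set.Ioc a b)), deriv f x ≤ M :=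
      (ae_restrict_iff' measurableSet_Ioc).2 hM
    calc ∫ x in Set.Ioc a b, deriv f x ≤ ∫ _x in Set.Ioc a b, M :=
          integral_mono_ae hint (integrableOn_const hvol) hle
      _ = M * (b - a) := by
          simp [Real.volume_Ioc, ENNReal.toReal_ofReal (sub_nonneg.2 hab), mul_comm, hab]
  have hfin : f b - f a = (K : ℝ) * (b - a) - (g b - g a) := by simp [hgdef]; ring
  rw [hfin]
  have := hub
  rw [hcongr, hsplit] at this
  linarith

lemma lemB {f : ℝ → ℝ} {K : NNReal} (hf : LipschitzWith K f) {a b M : ℝ}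
    (hab : a ≤ b) (hM : ∀ᵐ t, t ∈ Set.Ioc a b → |deriv f t| ≤ M) :
    |f b - f a| ≤ M * (b - a) := by
  have h1 : f b - f a ≤ M * (b - a) :=
    lemA hf hab (hM.mono fun t ht h => (abs_le.1 (ht h)).2)
  have hneg : LipschitzWith K (fun x => -f x) := hf.neg
  have h2 : (fun x => -f x) b - (fun x => -f x) a ≤ M * (b - a) := by
    refine lemA hneg hab (hM.mono fun t ht h => ?_)
    rw [deriv.fun_neg]
    have := (abs_le.1 (ht h)).1
    linarith
  simp only [neg_sub_neg] at h2
  exact abs_le.2 ⟨by linarith, h1⟩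

lemma le_biSup' {s : Set ℝ} (f : ℝ → ℝ) {b x : ℝ} (hb : 0 ≤ b)
    (h : ∀ y ∈ s, f y ≤ b) (hx : x ∈ s) : f x ≤ ⨆ y ∈ s, f y := by
  have hbdd : BddAbove (Set.range fun y => ⨆ _ : y ∈ s, f y) := by
    refine ⟨b, ?_⟩
    rintro _ ⟨y, rfl⟩
    exact Real.iSup_le (fun hy => h y hy) hb
  calc f x = ⨆ _ : x ∈ s, f x := (ciSup_pos (f := fun _ => f x) hx).symm
    _ ≤ ⨆ y ∈ s, f y := le_ciSup hbdd x

lemma cone_lip (z₀ : ℝ) {d : ℝ} (hd : 0 < d) :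
    LipschitzWith (1/d).toNNReal (fun y : ℝ => max 0 (1 - |y - z₀| / d)) := by
  have hcoe : (((1/d : ℝ).toNNReal : ℝ)) = 1/d := Real.coe_toNNReal _ (by positivity)
  refine LipschitzWith.of_dist_le_mul fun x y => ?_
  rw [hcoe, Real.dist_eq, Real.dist_eq]
  calc |max 0 (1 - |x - z₀| / d) - max 0 (1 - |y - z₀| / d)|
      = |max (1 - |x - z₀| / d) 0 - max (1 - |y - z₀| / d) 0| := by rw [max_comm, max_comm (1 - |y - z₀| / d)]
    _ ≤ |(1 - |x - z₀| / d) - (1 - |y - z₀| / d)| := abs_max_sub_max_le_abs _ _ _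
    _ = |(|y - z₀| - |x - z₀|)| / d := by
        rw [show (1 - |x - z₀| / d) - (1 - |y - z₀| / d) = (|y - z₀| - |x - z₀|)/d by ring,
          abs_div, abs_of_pos hd]
    _ ≤ |y - x| / d := by
        refine (div_le_div_iff_of_pos_right hd).2 ?_
        calc |(|y - z₀| - |x - z₀|)| ≤ |(y - z₀) - (x - z₀)| := abs_abs_sub_abs_le_abs_sub _ _
          _ = |y - x| := by ring_nf
    _ = 1 / d * |x - y| := by rw [abs_sub_comm]; ring

lemma cone_deriv_right (z₀ : ℝ) {d : ℝ} (hd : 0 < d) {y : ℝ} (h1 : z₀ < y) (h2 : y < z₀ + d) :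
    deriv (fun x : ℝ => max 0 (1 - |x - z₀| / d)) y = -(1/d) := by
  have hev : (fun x : ℝ => max 0 (1 - |x - z₀| / d)) =ᶠ[nhds y] (fun x => 1 - (x - z₀)/d) := by
    filter_upwards [Ioo_mem_nhds h1 h2] with x hx
    rw [abs_of_pos (sub_pos.2 hx.1), max_eq_right]
    have : (x - z₀)/d < 1 := (div_lt_one hd).2 (by linarith [hx.2])
    linarith
  rw [hev.deriv_eq]
  have : HasDerivAt (fun x : ℝ => 1 - (x - z₀)/d) (-(1/d)) y := by
    simpa using (((hasDerivAt_id y).sub_const z₀).div_const d).const_sub 1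
  exact this.deriv

lemma cone_deriv_left (z₀ : ℝ) {d : ℝ} (hd : 0 < d) {y : ℝ} (h1 : z₀ - d < y) (h2 : y < z₀) :
    deriv (fun x : ℝ => max 0 (1 - |x - z₀| / d)) y = 1/d := by
  have hev : (fun x : ℝ => max 0 (1 - |x - z₀| / d)) =ᶠ[nhds y] (fun x => 1 - (z₀ - x)/d) := by
    filter_upwards [Ioo_mem_nhds h1 h2] with x hx
    rw [abs_of_neg (sub_neg.2 hx.2), show -(x - z₀) = z₀ - x by ring, max_eq_right]
    have : (z₀ - x)/d < 1 := (div_lt_one hd).2 (by linarith [hx.1])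
    linarith
  rw [hev.deriv_eq]
  have : HasDerivAt (fun x : ℝ => 1 - (z₀ - x)/d) (1/d) y := by
    have h0 : HasDerivAt (fun x : ℝ => z₀ - x) (-1) y := by
      simpa using (hasDerivAt_id y).const_sub z₀
    have h1 := (h0.div_const d).const_sub 1
    rw [show (1:ℝ)/d = -(-1/d) by ring]
    exact h1
  exact this.deriv

theorem stmt4 (L : ℝ) (hL : 0 < L) (V : Set ℝ) (hV : V.Nonempty) (hVc : IsClosed V)
    (hVsub : V ⊆ Set.Icc 0 L) (z₀ : ℝ) (hz₀ : z₀ ∈ Set.Icc 0 L)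
    (hmax : ∀ z ∈ Set.Icc 0 L, Metric.infDist z V ≤ Metric.infDist z₀ V)
    (hpos : 0 < Metric.infDist z₀ V) :
    sInf {r : ℝ | ∃ (u : ℝ → ℝ) (K : NNReal), LipschitzWith K u ∧
        (∀ x ∈ V, u x = 0) ∧ (∃ x ∈ Set.Icc 0 L, u x ≠ 0) ∧
        r = essSup (fun x => |deriv u x|) (volume.restrict (Set.Icc 0 L)) /
            (⨆ x ∈ Set.Icc 0 L, |u x|)} = 1 / Metric.infDist z₀ V ∧
    essSup (fun x => |deriv (fun y : ℝ => max 0 (1 - |y - z₀| / Metric.infDist z₀ V)) x|)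
        (volume.restrict (Set.Icc 0 L)) /
      (⨆ x ∈ Set.Icc 0 L, |max 0 (1 - |x - z₀| / Metric.infDist z₀ V)|) =
      1 / Metric.infDist z₀ V := by
  set d := Metric.infDist z₀ V with hd
  have hd0 : 0 < d := hpos
  set u₀ : ℝ → ℝ := fun y => max 0 (1 - |y - z₀| / d) with hu₀
  set μ' := volume.restrict (Set.Icc 0 L) with hμ'
  have hμ'ne : μ' ≠ 0 := by
    rw [hμ', Ne, Measure.restrict_eq_zero]
    simp [Real.volume_Icc]
    linarith
  haveI : NeBot (ae μ') := ae_neBot.2 hμ'ne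
  have hlip : LipschitzWith (1/d : ℝ).toNNReal u₀ := cone_lip z₀ hd0
  have hderivbd : ∀ x, |deriv u₀ x| ≤ 1/d := fun x => by
    have h := norm_deriv_le_of_lipschitz (𝕜 := ℝ) hlip (x₀ := x)
    rwa [Real.norm_eq_abs, Real.coe_toNNReal _ (by positivity)] at h
  have hess_le : essSup (fun x => |deriv u₀ x|) μ' ≤ 1/d :=
    limsup_le_of_le (isCoboundedUnder_le_of_le (f := fun x => |deriv u₀ x|) _ (fun i => abs_nonneg _))
      (Eventually.of_forall hderivbd)
  obtain ⟨a', b', hab', hsub', hder'⟩ : ∃ a' b', a' < b' ∧ Set.Ioo a' b' ⊆ Set.Icc 0 L ∧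
      ∀ y ∈ Set.Ioo a' b', |deriv u₀ y| = 1/d := by
    rcases lt_or_eq_of_le hz₀.2 with hzL | hzL
    · refine ⟨z₀, min (z₀ + d) L, lt_min (by linarith) hzL, ?_, ?_⟩
      · intro y hy
        exact ⟨le_trans hz₀.1 hy.1.le, le_of_lt (lt_of_lt_of_le hy.2 (min_le_right _ _))⟩
      · intro y hy
        rw [hu₀, cone_deriv_right z₀ hd0 hy.1 (lt_of_lt_of_le hy.2 (min_le_left _ _)),
          abs_neg, abs_of_pos (by positivity)]
    · have hz0 : 0 < z₀ := hzL ▸ hL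
      refine ⟨max (z₀ - d) 0, z₀, max_lt (by linarith) hz0, ?_, ?_⟩
      · intro y hy
        exact ⟨le_trans (le_max_right _ _) hy.1.le, hzL ▸ hy.2.le⟩
      · intro y hy
        rw [hu₀, cone_deriv_left z₀ hd0 (lt_of_le_of_lt (le_max_left _ _) hy.1) hy.2]
        exact abs_of_pos (by positivity)
  have hfreq : ∃ᶠ x in (ae μ'), 1/d ≤ |deriv u₀ x| := by
    by_contra hcon
    rw [Filter.not_frequently] at hcon
    have h0 : μ' {x | 1/d ≤ |deriv u₀ x|} = 0 := by
      have h1 := ae_iff.1 hcon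
      simpa [not_not] using h1
    have hsub2 : Set.Ioo a' b' ⊆ {x | 1/d ≤ |deriv u₀ x|} := fun y hy => (hder' y hy).ge
    have h2 : μ' (Set.Ioo a' b') = 0 := measure_mono_null hsub2 h0
    rw [hμ', Measure.restrict_apply measurableSet_Ioo, Set.inter_eq_left.2 hsub',
      Real.volume_Ioo] at h2
    simp at h2
    linarith
  have hess_ge : 1/d ≤ essSup (fun x => |deriv u₀ x|) μ' :=
    le_limsup_of_frequently_le hfreq (isBoundedUnder_of ⟨1/d, hderivbd⟩)
  have hess : essSup (fun x => |deriv u₀ x|) μ' = 1/d := le_antisymm hess_le hess_ge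
  have hu₀bd : ∀ x, |u₀ x| ≤ 1 := fun x => by
    rw [hu₀]
    simp only []
    rw [abs_of_nonneg (le_max_left _ _)]
    refine max_le one_pos.le ?_
    have h1 : 0 ≤ |x - z₀| / d := by positivity
    linarith
  have hu₀z₀ : u₀ z₀ = 1 := by rw [hu₀]; norm_num
  have hsup : (⨆ x ∈ Set.Icc 0 L, |u₀ x|) = 1 := by
    refine le_antisymm
      (Real.iSup_le (fun x => Real.iSup_le (fun _ => hu₀bd x) one_pos.le) one_pos.le) ?_
    calc (1:ℝ) = |u₀ z₀| := by rw [hu₀z₀]; norm_num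
      _ ≤ ⨆ x ∈ Set.Icc 0 L, |u₀ x| := le_biSup' _ one_pos.le (fun y _ => hu₀bd y) hz₀
  have part2 : essSup (fun x => |deriv u₀ x|) μ' / (⨆ x ∈ Set.Icc 0 L, |u₀ x|) = 1/d := by
    rw [hess, hsup, div_one]
  have hvanish : ∀ x ∈ V, u₀ x = 0 := by
    intro x hx
    rw [hu₀]
    simp only []
    rw [max_eq_left]
    have h1 : d ≤ |z₀ - x| := by
      rw [hd, ← Real.dist_eq]
      exact Metric.infDist_le_dist_of_mem hx
    rw [abs_sub_comm] at h1
    have h2 : 1 ≤ |x - z₀| / d := (one_le_div hd0).2 h1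
    linarith
  have hlow : ∀ r ∈ {r : ℝ | ∃ (u : ℝ → ℝ) (K : NNReal), LipschitzWith K u ∧
      (∀ x ∈ V, u x = 0) ∧ (∃ x ∈ Set.Icc 0 L, u x ≠ 0) ∧
      r = essSup (fun x => |deriv u x|) μ' / (⨆ x ∈ Set.Icc 0 L, |u x|)}, 1/d ≤ r := by
    rintro r ⟨u, K, huK, huV, ⟨xs, hxs, hxs0⟩, rfl⟩
    set M := essSup (fun x => |deriv u x|) μ' with hM
    set T := (⨆ x ∈ Set.Icc 0 L, |u x|) with hT
    have hKbd : ∀ x, |deriv u x| ≤ (K : ℝ) := fun x => by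
      simpa [Real.norm_eq_abs] using norm_deriv_le_of_lipschitz (𝕜 := ℝ) huK (x₀ := x)
    have hM0 : 0 ≤ M :=
      le_limsup_of_frequently_le
        ((Eventually.of_forall (fun x => abs_nonneg (deriv u x))).frequently)
        (isBoundedUnder_of ⟨(K : ℝ), hKbd⟩)
    have hkey : ∀ x ∈ Set.Icc 0 L, |u x| ≤ M * d := by
      intro x hx
      obtain ⟨v, hvV, hvd⟩ := hVc.exists_infDist_eq_dist hV x
      have hvIcc := hVsub hvV
      have hdist : dist x v ≤ d := by rw [← hvd, hd]; exact hmax x hx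
      have huv : u v = 0 := huV v hvV
      by_cases hxv : x = v
      · rw [hxv, huv, abs_zero]
        exact mul_nonneg hM0 hd0.le
      have hpos' : 0 < |x - v| := abs_pos.2 (sub_ne_zero.2 hxv)
      have hstep : ∀ ε > 0, |u x - u v| ≤ (M + ε) * |x - v| := by
        intro ε hε
        have hlim : ∀ᶠ t in (ae μ'), |deriv u t| < M + ε :=
          eventually_lt_of_limsup_lt
            (by change essSup (fun x => |deriv u x|) μ' < M + ε; rw [← hM]; linarith)
            (isBoundedUnder_of ⟨(K : ℝ), hKbd⟩)
        have hae : ∀ᵐ t, t ∈ Set.Icc 0 L → |deriv u t| < M + ε := by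
          rw [hμ'] at hlim
          exact (ae_restrict_iff' measurableSet_Icc).1 hlim
        rcases le_total v x with hvx | hvx
        · have hineq := lemB huK hvx (hae.mono fun t ht hmem =>
            (ht ⟨le_trans hvIcc.1 hmem.1.le, le_trans hmem.2 hx.2⟩).le)
          rwa [abs_of_nonneg (sub_nonneg.2 hvx)]
        · have hineq := lemB huK hvx (hae.mono fun t ht hmem =>
            (ht ⟨le_trans hx.1 hmem.1.le, le_trans hmem.2 hvIcc.2⟩).le)
          rw [abs_sub_comm, abs_of_nonpos (sub_nonpos.2 hvx)]
          rwa [show -(x - v) = v - x by ring]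
      have hfin : |u x - u v| ≤ M * |x - v| := by
        refine le_of_forall_pos_le_add fun δ hδ => ?_
        have h1 := hstep (δ / |x - v|) (by positivity)
        calc |u x - u v| ≤ (M + δ / |x - v|) * |x - v| := h1
          _ = M * |x - v| + δ := by
              rw [add_mul, div_mul_cancel₀ _ (ne_of_gt hpos')]
      calc |u x| = |u x - u v| := by rw [huv, sub_zero]
        _ ≤ M * |x - v| := hfin
        _ = M * dist x v := by rw [Real.dist_eq]
        _ ≤ M * d := mul_le_mul_of_nonneg_left hdist hM0
    have hMd0 : 0 ≤ M * d := mul_nonneg hM0 hd0.le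
    have hT_le : T ≤ M * d :=
      Real.iSup_le (fun x => Real.iSup_le (fun hx => hkey x hx) hMd0) hMd0
    have hT_pos : 0 < T :=
      lt_of_lt_of_le (abs_pos.2 hxs0) (le_biSup' _ hMd0 hkey hxs)
    have hM_pos : 0 < M := by nlinarith
    rw [div_le_div_iff₀ hd0 hT_pos, one_mul]
    nlinarith
  constructor
  · refine le_antisymm ?_ ?_
    · refine csInf_le ⟨1/d, fun r hr => hlow r hr⟩ ?_
      exact ⟨u₀, (1/d : ℝ).toNNReal, hlip, hvanish,
        ⟨z₀, hz₀, by rw [hu₀z₀]; exact one_ne_zero⟩, part2.symm⟩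
    · refine le_csInf ⟨1/d, ?_⟩ hlow
      exact ⟨u₀, (1/d : ℝ).toNNReal, hlip, hvanish,
        ⟨z₀, hz₀, by rw [hu₀z₀]; exact one_ne_zero⟩, part2.symm⟩
  · exact part2
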